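/- arXiv:0907.0403 — 5 statements merged into one kernel-verified Lean document; each statement's English description precedes it below -/
import Mathlib

section
/- Characterization of common knowledge of a fact in the forwarding setting: For G ⊆ N with |G| ≥ 2, atom p ∈ At, and H-compliant forwarding state (V,M), we have (V,M) ⊨_H C_G p iff there is a message (·,A,p) ∈ M with G ⊆ A. -/
structure Msg (P A : Type) where
  sender : P
  grp : Set P
  fact : A

inductive Form (P A : Type) where
  | atom : A → Form P A
  | neg  : Form P A → Form P A
  | and  : Form P A → Form P A → Form P A
  | or   : Form P A → Form P A → Form P A
  | ck   : Set P → Form P A → Form P A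

/-- The negation-free (positive) fragment L⁺. -/
def Positive {P A : Type} : Form P A → Prop
  | .atom _ => True
  | .neg _ => False
  | .and φ ψ => Positive φ ∧ Positive ψ
  | .or φ ψ => Positive φ ∧ Positive ψ
  | .ck _ φ => Positive φ

/-- Atoms occurring in a formula. -/
def FactsF {P A : Type} : Form P A → Set A
  | .atom p => {p}
  | .neg φ => FactsF φ
  | .and φ ψ => FactsF φ ∪ FactsF ψ
  | .or φ ψ => FactsF φ ∪ FactsF ψ
  | .ck _ φ => FactsF φ

/-- Facts occurring in a set of messages. -/
def Facts {P A : Type} (M : Set (Msg P A)) : Set A := {p | ∃ m ∈ M, m.fact = p}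

/-- All messages are H-compliant. -/
def HComp {P A : Type} (H : Set (Set P)) (M : Set (Msg P A)) : Prop :=
  ∀ m ∈ M, m.grp ∈ H

/-- (j,B,p) ⤳ (i,A,p): p ∉ At_i and i ∈ B. -/
def leadsto {P A : Type} (owner : A → P) (m m' : Msg P A) : Prop :=
  m'.fact = m.fact ∧ owner m'.fact ≠ m'.sender ∧ m'.sender ∈ m.grp

/-- An explanation of a message m in (V,M): a non-circular ⤳-chain of
    p-messages in M starting at a player who initially knows p = m.fact
    and ending at m. -/
def Explains {P A : Type} (owner : A → P) (V : Set A) (M : Set (Msg P A))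
    (m : Msg P A) : Prop :=
  ∃ L : List (Msg P A),
    (∀ x ∈ L, x ∈ M) ∧
    List.Chain' (leadsto owner) L ∧
    (L.map Msg.sender).Nodup ∧
    (∀ x ∈ L, x.fact = m.fact) ∧
    (∃ m₀, L.head? = some m₀ ∧ owner m₀.fact = m₀.sender ∧ m₀.fact ∈ V) ∧
    L.getLast? = some m

/-- A forwarding state: every message has a sender in its group and an explanation. -/
def FwState {P A : Type} (owner : A → P) (V : Set A) (M : Set (Msg P A)) : Prop :=
  ∀ m ∈ M, m.sender ∈ m.grp ∧ Explains owner V M m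

/-- Indistinguishability for player i: equality of (V_i, M_i). -/
def indist {P A : Type} (owner : A → P) (i : P)
    (s t : Set A × Set (Msg P A)) : Prop :=
  {p ∈ s.1 | owner p = i} = {p ∈ t.1 | owner p = i} ∧
  {m ∈ s.2 | i ∈ m.grp} = {m ∈ t.2 | i ∈ m.grp}

/-- ∼_G: transitive closure of the union of the ∼_i, i ∈ G. -/
def reach {P A : Type} (owner : A → P) (G : Set P) :
    Set A × Set (Msg P A) → Set A × Set (Msg P A) → Prop :=
  Relation.TransGen (fun s t => ∃ i ∈ G, indist owner i s t)

/-- Semantics ⊨_H (forwarding setting): C_G quantifies over H-compliant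
    forwarding states. -/
def sat {P A : Type} (owner : A → P) (H : Set (Set P)) :
    Form P A → Set A → Set (Msg P A) → Prop
  | .atom p, V, _ => p ∈ V
  | .neg φ, V, M => ¬ sat owner H φ V M
  | .and φ ψ, V, M => sat owner H φ V M ∧ sat owner H ψ V M
  | .or φ ψ, V, M => sat owner H φ V M ∨ sat owner H ψ V M
  | .ck G φ, V, M => ∀ V' M', FwState owner V' M' → HComp H M' →
      reach owner G (V, M) (V', M') → sat owner H φ V' M'

/-- The complete hypergraph: all nonempty subsets of players. -/
def completeH (P : Type) : Set (Set P) := {B | B.Nonempty}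


lemma mem_of_reach {P A : Type} (owner : A → P) (G : Set P)
    {s t : Set A × Set (Msg P A)} (h : reach owner G s t)
    (m : Msg P A) (hm : m ∈ s.2) (hg : G ⊆ m.grp) : m ∈ t.2 := by
  induction h with
  | single h =>
    obtain ⟨i, hi, _, h2⟩ := h
    have : m ∈ {x ∈ s.2 | i ∈ x.grp} := ⟨hm, hg hi⟩
    rw [h2] at this
    exact this.1
  | tail _ h ih =>
    obtain ⟨i, hi, _, h2⟩ := h
    have : m ∈ {x ∈ _ | i ∈ x.grp} := ⟨ih, hg hi⟩
    rw [h2] at this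
    exact this.1

lemma reach_strip {P A : Type} (owner : A → P) (G : Set P) (V : Set A)
    (M : Set (Msg P A)) (p : A) (i₁ : P) (hi₁ : i₁ ∈ G) (hne : owner p ≠ i₁)
    (l : List P) (hl : ∀ i ∈ l, i ∈ G) :
    reach owner G (V, M)
      (V \ {p}, M \ {m | m.fact = p ∧ ∃ i ∈ i₁ :: l, i ∉ m.grp}) := by
  induction l using List.reverseRecOn with
  | nil =>
    refine Relation.TransGen.single ⟨i₁, hi₁, ?_, ?_⟩
    · ext q
      simp only [Set.mem_setOf_eq, Set.mem_sep_iff, Set.mem_diff, Set.mem_singleton_iff]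
      constructor
      · rintro ⟨hq, ho⟩
        refine ⟨⟨hq, ?_⟩, ho⟩
        rintro rfl; exact hne ho
      · rintro ⟨⟨hq, _⟩, ho⟩; exact ⟨hq, ho⟩
    · ext m
      simp only [Set.mem_setOf_eq, Set.mem_sep_iff, Set.mem_diff, List.mem_cons,
        List.not_mem_nil, or_false]
      constructor
      · rintro ⟨hm, hg⟩
        refine ⟨⟨hm, ?_⟩, hg⟩
        rintro ⟨_, i, rfl, hig⟩; exact hig hg
      · rintro ⟨⟨hm, _⟩, hg⟩; exact ⟨hm, hg⟩
  | append_singleton l i ih =>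
    have hl' : ∀ k ∈ l, k ∈ G := fun k hk => hl k (by simp [hk])
    have hiG : i ∈ G := hl i (by simp)
    refine Relation.TransGen.tail (ih hl') ⟨i, hiG, rfl, ?_⟩
    ext m
    simp only [Set.mem_setOf_eq, Set.mem_sep_iff, Set.mem_diff, List.mem_cons,
      List.mem_append, List.mem_singleton]
    constructor
    · rintro ⟨⟨hm, hd⟩, hg⟩
      refine ⟨⟨hm, ?_⟩, hg⟩
      rintro ⟨hfp, k, hk, hkg⟩
      rcases hk with rfl | hk | rfl | hk
      · exact hd ⟨hfp, k, Or.inl rfl, hkg⟩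
      · exact hd ⟨hfp, k, Or.inr hk, hkg⟩
      · exact hkg hg
      · exact (List.not_mem_nil hk).elim
    · rintro ⟨⟨hm, hd⟩, hg⟩
      refine ⟨⟨hm, ?_⟩, hg⟩
      rintro ⟨hfp, k, hk, hkg⟩
      rcases hk with rfl | hk
      · exact hd ⟨hfp, k, Or.inl rfl, hkg⟩
      · exact hd ⟨hfp, k, Or.inr (Or.inl hk), hkg⟩

lemma fwstate_strip {P A : Type} (owner : A → P) (V : Set A) (M : Set (Msg P A))
    (hS : FwState owner V M) (p : A) :
    FwState owner (V \ {p}) {m ∈ M | m.fact ≠ p} := by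
  intro m hm
  obtain ⟨hm, hmp⟩ := hm
  obtain ⟨hsg, L, hLM, hchain, hnodup, hfacts, ⟨m₀, hh, ho, hv⟩, hlast⟩ := hS m hm
  refine ⟨hsg, L, ?_, hchain, hnodup, hfacts, ⟨m₀, hh, ho, ?_⟩, hlast⟩
  · intro x hx
    exact ⟨hLM x hx, by rw [hfacts x hx]; exact hmp⟩
  · have hm₀L : m₀ ∈ L := List.mem_of_mem_head? hh
    refine ⟨hv, ?_⟩
    simp only [Set.mem_singleton_iff]
    rw [hfacts m₀ hm₀L]
    exact hmp

theorem fw_ck_fact_iff_msg {P A : Type} [Fintype P] (owner : A → P)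
    (H : Set (Set P)) (V : Set A) (M : Set (Msg P A))
    (hS : FwState owner V M) (hC : HComp H M)
    (G : Set P) (hG : ∃ i ∈ G, ∃ j ∈ G, i ≠ j) (p : A) :
    sat owner H (.ck G (.atom p)) V M ↔ ∃ m ∈ M, G ⊆ m.grp ∧ m.fact = p := by
  classical
  simp only [sat]
  constructor
  · intro h
    by_contra hno
    push_neg at hno
    obtain ⟨i, hiG, j, hjG, hij⟩ := hG
    set i₁ := if owner p = i then j else i with hi₁def
    have hi₁G : i₁ ∈ G := by
      rw [hi₁def]; split_ifs <;> assumption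
    have hne : owner p ≠ i₁ := by
      rw [hi₁def]; split_ifs with h'
      · rw [h']; exact hij
      · exact h'
    set l := G.toFinite.toFinset.toList with hldef
    have hliff : ∀ k, k ∈ l ↔ k ∈ G := by
      intro k
      rw [hldef, Finset.mem_toList, Set.Finite.mem_toFinset]
    have hl : ∀ k ∈ l, k ∈ G := fun k hk => (hliff k).mp hk
    have hreach := reach_strip owner G V M p i₁ hi₁G hne l hl
    have hDE : M \ {m | m.fact = p ∧ ∃ k ∈ i₁ :: l, k ∉ m.grp}
        = {m ∈ M | m.fact ≠ p} := by
      ext m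
      simp only [Set.mem_diff, Set.mem_setOf_eq, Set.mem_sep_iff]
      constructor
      · rintro ⟨hm, hd⟩
        refine ⟨hm, fun hfp => ?_⟩
        have hns : ¬ G ⊆ m.grp := fun hs => hno m hm hs hfp
        obtain ⟨k, hkG, hkg⟩ := Set.not_subset.mp hns
        have hkl : k ∈ i₁ :: l := List.mem_cons_of_mem _ ((hliff k).mpr hkG)
        exact hd ⟨hfp, k, hkl, hkg⟩
      · rintro ⟨hm, hfp⟩
        exact ⟨hm, fun hd => hfp hd.1⟩
    rw [hDE] at hreach
    have hFw := fwstate_strip owner V M hS p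
    have hHC : HComp H {m ∈ M | m.fact ≠ p} := fun m hm => hC m hm.1
    have := h (V \ {p}) {m ∈ M | m.fact ≠ p} hFw hHC hreach
    exact this.2 rfl
  · rintro ⟨m, hm, hGg, hfact⟩ V' M' hFw _ hreach
    have hmem := mem_of_reach owner G hreach m hm hGg
    obtain ⟨_, L, _, _, _, hfacts, ⟨m₀, hh, _, hv⟩, _⟩ := hFw m hmem
    have hm₀L : m₀ ∈ L := List.mem_of_mem_head? hh
    have : m₀.fact = p := by rw [hfacts m₀ hm₀L, hfact]
    show p ∈ V'
    rw [← this]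
    exact hv
end

section
/- Individual knowledge of a fact in the forwarding setting: For any player i, atom p ∈ At, and H-compliant forwarding state (V,M), (V,M) ⊨_H K_i p iff p ∈ V_i ∪ Facts(M_i), i.e., player i knows p iff he either initially knows it (p ∈ V ∩ At_i) or has received a message containing it. -/
lemma fact_mem_of_fwstate {P A : Type} (owner : A → P) (V : Set A)
    (M : Set (Msg P A)) (hS : FwState owner V M) {m : Msg P A} (hm : m ∈ M) :
    m.fact ∈ V := by
  obtain ⟨L, _, _, _, hfacts, ⟨m₀, hhead, _, hV⟩, _⟩ := (hS m hm).2
  have hm₀ : m₀ ∈ L := List.mem_of_mem_head? hhead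
  rw [hfacts m₀ hm₀] at hV
  exact hV

lemma indist_of_reach {P A : Type} (owner : A → P) (i : P)
    {s t : Set A × Set (Msg P A)} (h : reach owner {i} s t) :
    indist owner i s t := by
  induction h with
  | single h => obtain ⟨j, hj, hst⟩ := h; rw [Set.mem_singleton_iff] at hj; rwa [hj] at hst
  | tail _ h ih =>
    obtain ⟨j, hj, hst⟩ := h
    rw [Set.mem_singleton_iff] at hj
    rw [hj] at hst
    exact ⟨ih.1.trans hst.1, ih.2.trans hst.2⟩

theorem fw_knows_fact_iff {P A : Type} [Fintype P] (owner : A → P)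
    (H : Set (Set P)) (V : Set A) (M : Set (Msg P A))
    (hS : FwState owner V M) (hC : HComp H M)
    (i : P) (p : A) :
    sat owner H (.ck {i} (.atom p)) V M ↔
      (p ∈ V ∧ owner p = i) ∨ ∃ m ∈ M, i ∈ m.grp ∧ m.fact = p := by
  constructor
  · intro hsat
    by_contra hcon
    push_neg at hcon
    obtain ⟨h1, h2⟩ := hcon
    set V' : Set A := {q ∈ V | owner q = i} ∪ Facts {m ∈ M | i ∈ m.grp} with hV'
    set M' : Set (Msg P A) := {m ∈ M | m.fact ∈ Facts {m ∈ M | i ∈ m.grp}} with hM'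
    have hsubV : Facts {m ∈ M | i ∈ m.grp} ⊆ V := by
      rintro q ⟨m, ⟨hmM, _⟩, rfl⟩
      exact fact_mem_of_fwstate owner V M hS hmM
    have hfw : FwState owner V' M' := by
      rintro m ⟨hmM, hmf⟩
      refine ⟨(hS m hmM).1, ?_⟩
      obtain ⟨L, hLM, hchain, hnd, hfacts, ⟨m₀, hhead, hown, hV0⟩, hlast⟩ := (hS m hmM).2
      refine ⟨L, ?_, hchain, hnd, hfacts, ⟨m₀, hhead, hown, ?_⟩, hlast⟩
      · intro x hx
        refine ⟨hLM x hx, ?_⟩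
        rw [hfacts x hx]; exact hmf
      · rw [hfacts m₀ (List.mem_of_mem_head? hhead)]
        exact Or.inr hmf
    have hcomp : HComp H M' := fun m hm => hC m hm.1
    have hreach : reach owner {i} (V, M) (V', M') := by
      refine Relation.TransGen.single ⟨i, rfl, ?_, ?_⟩
      · ext q
        simp only [Set.mem_setOf_eq, hV', Set.mem_union]
        constructor
        · rintro ⟨hq, hoq⟩; exact ⟨Or.inl ⟨hq, hoq⟩, hoq⟩
        · rintro ⟨hq, hoq⟩
          refine ⟨?_, hoq⟩
          rcases hq with ⟨hq, _⟩ | hq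
          · exact hq
          · exact hsubV hq
      · ext m
        simp only [Set.mem_setOf_eq, hM']
        constructor
        · rintro ⟨hm, hg⟩; exact ⟨⟨hm, ⟨m, ⟨hm, hg⟩, rfl⟩⟩, hg⟩
        · rintro ⟨⟨hm, _⟩, hg⟩; exact ⟨hm, hg⟩
    have hp := hsat V' M' hfw hcomp hreach
    rcases hp with ⟨hp, _⟩ | ⟨m, ⟨hmM, hig⟩, rfl⟩
    · exact h1 hp (by assumption)
    · exact h2 m hmM hig rfl
  · intro h
    intro V' M' hfw hcomp hreach
    have hind := indist_of_reach owner i hreach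
    rcases h with ⟨hpV, hpi⟩ | ⟨m, hmM, hig, hfp⟩
    · have : p ∈ {q ∈ V' | owner q = i} := by
        rw [← hind.1]; exact ⟨hpV, hpi⟩
      exact this.1
    · have hm' : m ∈ {m ∈ M' | i ∈ m.grp} := by
        rw [← hind.2]; exact ⟨hmM, hig⟩
      have := fact_mem_of_fwstate owner V' M' hfw hm'.1
      rwa [hfp] at this
end

section
/- Distributivity of C_G over disjunctions of atoms (forwarding setting): For any H-compliant forwarding state (V,M), nonempty G ⊆ N, and atoms p₁,…,p_k, (V,M) ⊨_H C_G(p₁ ∨ … ∨ p_k) iff (V,M) ⊨_H C_G p₁ ∨ … ∨ C_G p_k. -/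
/-- Disjunction p₁ ∨ … ∨ p_k of the atoms p :: ps. -/
def disjList {P A : Type} (p : A) (ps : List A) : Form P A :=
  ps.foldl (fun φ q => Form.or φ (Form.atom q)) (Form.atom p)


section Aux

variable {P A : Type}

lemma sat_or_unfold (owner : A → P) (H : Set (Set P)) (φ ψ : Form P A) (V : Set A)
    (M : Set (Msg P A)) : sat owner H (.or φ ψ) V M ↔ sat owner H φ V M ∨ sat owner H ψ V M :=
  Iff.rfl

lemma sat_foldl_or (owner : A → P) (H : Set (Set P)) (ps : List A) (φ : Form P A)
    (V : Set A) (M : Set (Msg P A)) :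
    sat owner H (ps.foldl (fun φ q => Form.or φ (Form.atom q)) φ) V M ↔
      sat owner H φ V M ∨ ∃ q ∈ ps, q ∈ V := by
  induction ps generalizing φ with
  | nil => simp
  | cons a l ih =>
    simp only [List.foldl_cons, ih, sat_or_unfold]
    constructor
    · rintro ((h | h) | h)
      · exact Or.inl h
      · exact Or.inr ⟨a, by simp, h⟩
      · obtain ⟨q, hq, hqV⟩ := h
        exact Or.inr ⟨q, by simp [hq], hqV⟩
    · rintro (h | ⟨q, hq, hqV⟩)
      · exact Or.inl (Or.inl h)
      · rcases List.mem_cons.mp hq with rfl | hq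
        · exact Or.inl (Or.inr hqV)
        · exact Or.inr ⟨q, hq, hqV⟩

lemma sat_disjList (owner : A → P) (H : Set (Set P)) (p : A) (ps : List A)
    (V : Set A) (M : Set (Msg P A)) :
    sat owner H (disjList p ps) V M ↔ ∃ q ∈ p :: ps, q ∈ V := by
  unfold disjList
  rw [sat_foldl_or]
  show p ∈ V ∨ _ ↔ _
  constructor
  · rintro (h | ⟨q, hq, hqV⟩)
    · exact ⟨p, by simp, h⟩
    · exact ⟨q, by simp [hq], hqV⟩
  · rintro ⟨q, hq, hqV⟩
    rcases List.mem_cons.mp hq with rfl | hq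
    · exact Or.inl hqV
    · exact Or.inr ⟨q, hq, hqV⟩

lemma indist_symm (owner : A → P) (i : P) {s t : Set A × Set (Msg P A)}
    (h : indist owner i s t) : indist owner i t s := ⟨h.1.symm, h.2.symm⟩

lemma reach_symm (owner : A → P) (G : Set P) {s t : Set A × Set (Msg P A)}
    (h : reach owner G s t) : reach owner G t s := by
  induction h with
  | single h => exact Relation.TransGen.single ⟨h.choose, h.choose_spec.1,
      indist_symm owner _ h.choose_spec.2⟩
  | tail _ h ih =>
    obtain ⟨i, hi, hind⟩ := h
    exact Relation.TransGen.head ⟨i, hi, indist_symm owner i hind⟩ ih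

lemma reach_self (owner : A → P) {G : Set P} (hG : G.Nonempty)
    (s : Set A × Set (Msg P A)) : reach owner G s s := by
  obtain ⟨i, hi⟩ := hG
  exact Relation.TransGen.single ⟨i, hi, rfl, rfl⟩

lemma fact_mem_of_fw {owner : A → P} {V : Set A} {M : Set (Msg P A)}
    (hS : FwState owner V M) {m : Msg P A} (hm : m ∈ M) : m.fact ∈ V := by
  obtain ⟨-, L, _, _, _, hfacts, ⟨m₀, hhead, _, hm₀V⟩, _⟩ := hS m hm
  have hm₀L : m₀ ∈ L := List.mem_of_mem_head? (by simp [hhead])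
  rw [← hfacts m₀ hm₀L]
  exact hm₀V

/-- Replace the `q`-slice of `b` by the `q`-slice of `s`. -/
def mixS (owner : A → P) (q : A) (b s : Set A × Set (Msg P A)) :
    Set A × Set (Msg P A) :=
  ((b.1 \ {q}) ∪ (s.1 ∩ {q}), {m ∈ b.2 | m.fact ≠ q} ∪ {m ∈ s.2 | m.fact = q})

lemma indist_mixS (owner : A → P) (q : A) (b : Set A × Set (Msg P A)) {i : P}
    {s t : Set A × Set (Msg P A)} (h : indist owner i s t) :
    indist owner i (mixS owner q b s) (mixS owner q b t) := by
  obtain ⟨h1, h2⟩ := h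
  constructor
  · ext x
    have h1x := Set.ext_iff.mp h1 x
    simp only [Set.mem_setOf_eq] at h1x
    by_cases hx : x = q <;>
      simp only [mixS, Set.mem_setOf_eq, Set.mem_union, Set.mem_diff,
        Set.mem_singleton_iff, Set.mem_inter_iff] <;> tauto
  · ext m
    have h2m := Set.ext_iff.mp h2 m
    simp only [Set.mem_setOf_eq] at h2m
    by_cases hm : m.fact = q <;>
      simp only [mixS, Set.mem_setOf_eq, Set.mem_union] <;> tauto

lemma reach_mixS (owner : A → P) (G : Set P) (q : A) (b : Set A × Set (Msg P A))
    {s t : Set A × Set (Msg P A)} (h : reach owner G s t) :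
    reach owner G (mixS owner q b s) (mixS owner q b t) :=
  Relation.TransGen.lift (r := fun s t => ∃ i ∈ G, indist owner i s t)
    (p := fun s t => ∃ i ∈ G, indist owner i s t) (mixS owner q b)
    (fun _ _ ⟨i, hi, hind⟩ => ⟨i, hi, indist_mixS owner q b hind⟩) _ _ h

lemma fw_restrict {owner : A → P} {V : Set A} {M : Set (Msg P A)}
    (hS : FwState owner V M) (q : A) :
    FwState owner (V \ {q}) {m ∈ M | m.fact ≠ q} := by
  rintro m ⟨hmM, hmq⟩
  obtain ⟨hsg, L, hLM, hchain, hnodup, hfacts, ⟨m₀, hhead, ho, hm₀V⟩, hlast⟩ := hS m hmM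
  refine ⟨hsg, L, ?_, hchain, hnodup, hfacts, ⟨m₀, hhead, ho, ?_⟩, hlast⟩
  · intro x hx
    exact ⟨hLM x hx, by rw [hfacts x hx]; exact hmq⟩
  · have hm₀L : m₀ ∈ L := List.mem_of_mem_head? (by simp [hhead])
    exact ⟨hm₀V, by rw [hfacts m₀ hm₀L]; exact hmq⟩

/-- From a state `(V, M)` that reaches some fw-state lacking `q`, one can reach
the state with the whole `q`-slice deleted. -/
lemma kill {owner : A → P} {G : Set P} {V V' : Set A} {M M' : Set (Msg P A)}
    (hr : reach owner G (V, M) (V', M')) (hfw' : FwState owner V' M')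
    {q : A} (hq : q ∉ V') :
    reach owner G (V, M) (V \ {q}, {m ∈ M | m.fact ≠ q}) := by
  have h := reach_mixS owner G q (V, M) hr
  have e1 : mixS owner q (V, M) (V, M) = (V, M) := by
    unfold mixS
    refine Prod.ext ?_ ?_
    · ext x; by_cases hx : x = q <;> simp [hx]
    · ext m; by_cases hm : m.fact = q <;> simp [hm]
  have e2 : mixS owner q (V, M) (V', M') = (V \ {q}, {m ∈ M | m.fact ≠ q}) := by
    unfold mixS
    refine Prod.ext ?_ ?_
    · ext x
      simp only [Set.mem_union, Set.mem_inter_iff, Set.mem_singleton_iff]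
      constructor
      · rintro (h | ⟨hx, rfl⟩)
        · exact h
        · exact absurd hx hq
      · exact Or.inl
    · ext m
      simp only [Set.mem_union, Set.mem_setOf_eq]
      constructor
      · rintro (h | ⟨hm, hf⟩)
        · exact h
        · exact absurd (hf ▸ fact_mem_of_fw hfw' hm) hq
      · exact Or.inl
  rwa [e1, e2] at h

lemma multi_kill {owner : A → P} {H : Set (Set P)} {V : Set A} {M : Set (Msg P A)}
    (hS : FwState owner V M) (hC : HComp H M) {G : Set P} (hG : G.Nonempty)
    (l : List A)
    (hl : ∀ q ∈ l, ∃ V' M', FwState owner V' M' ∧ HComp H M' ∧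
      reach owner G (V, M) (V', M') ∧ q ∉ V') :
    ∃ V' M', FwState owner V' M' ∧ HComp H M' ∧ reach owner G (V, M) (V', M') ∧
      ∀ q ∈ l, q ∉ V' := by
  induction l with
  | nil => exact ⟨V, M, hS, hC, reach_self owner hG _, by simp⟩
  | cons a l ih =>
    obtain ⟨V₁, M₁, hS₁, hC₁, hr₁, hl₁⟩ :=
      ih (fun q hq => hl q (List.mem_cons_of_mem a hq))
    obtain ⟨Va, Ma, hSa, _, hra, hqa⟩ := hl a List.mem_cons_self
    have hr₂ : reach owner G (V₁, M₁) (Va, Ma) :=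
      Relation.TransGen.trans (reach_symm owner G hr₁) hra
    have hkill := kill hr₂ hSa hqa
    refine ⟨V₁ \ {a}, {m ∈ M₁ | m.fact ≠ a}, fw_restrict hS₁ a,
      fun m hm => hC₁ m hm.1, Relation.TransGen.trans hr₁ hkill, ?_⟩
    intro q hq
    rcases List.mem_cons.mp hq with rfl | hq
    · simp
    · intro hqmem
      exact hl₁ q hq hqmem.1

end Aux

theorem fw_ck_distributes_over_atom_disjunction {P A : Type} [Fintype P]
    (owner : A → P) (H : Set (Set P)) (V : Set A) (M : Set (Msg P A))
    (hS : FwState owner V M) (hC : HComp H M)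
    (G : Set P) (hG : G.Nonempty) (p : A) (ps : List A) :
    sat owner H (.ck G (disjList p ps)) V M ↔
      (sat owner H (.ck G (.atom p)) V M ∨
        ∃ q ∈ ps, sat owner H (.ck G (.atom q)) V M) := by
  constructor
  · intro h
    by_contra hcon
    push_neg at hcon
    obtain ⟨hp, hps⟩ := hcon
    have hl : ∀ q ∈ p :: ps, ∃ V' M', FwState owner V' M' ∧ HComp H M' ∧
        reach owner G (V, M) (V', M') ∧ q ∉ V' := by
      intro q hq
      rcases List.mem_cons.mp hq with rfl | hq
      · simp only [sat, not_forall] at hp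
        obtain ⟨V', M', hfw, hcp, hr, hnq⟩ := hp
        exact ⟨V', M', hfw, hcp, hr, hnq⟩
      · have := hps q hq
        simp only [sat, not_forall] at this
        obtain ⟨V', M', hfw, hcp, hr, hnq⟩ := this
        exact ⟨V', M', hfw, hcp, hr, hnq⟩
    obtain ⟨V', M', hfw, hcp, hr, hall⟩ := multi_kill hS hC hG (p :: ps) hl
    have hsat : sat owner H (disjList p ps) V' M' := h V' M' hfw hcp hr
    obtain ⟨q, hq, hqV⟩ := (sat_disjList owner H p ps V' M').mp hsat
    exact hall q hq hqV
  · rintro (h | ⟨q, hq, h⟩) <;>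
    · intro V' M' hfw hcp hr
      rw [sat_disjList]
      first
      | exact ⟨p, List.mem_cons_self, h V' M' hfw hcp hr⟩
      | exact ⟨q, List.mem_cons_of_mem p hq, h V' M' hfw hcp hr⟩
end

section
/- Hypergraph-independence for non-nested positive formulas (forwarding setting): Let L⁺_K be the fragment of L⁺ in which knowledge operators C_G are not nested (so under any C_G the formula is a negation-free propositional formula). For any H-compliant forwarding state (V,M) and φ ∈ L⁺_K, (V,M) ⊨ φ iff (V,M) ⊨_H φ. -/
/-- Negation-free propositional formulas (atoms, ∧, ∨ only). -/
def PropPos {P A : Type} : Form P A → Prop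
  | .atom _ => True
  | .and φ ψ => PropPos φ ∧ PropPos ψ
  | .or φ ψ => PropPos φ ∧ PropPos ψ
  | _ => False

/-- The fragment L⁺_K of L⁺: no nested knowledge operators. -/
def NonNested {P A : Type} : Form P A → Prop
  | .atom _ => True
  | .neg _ => False
  | .and φ ψ => NonNested φ ∧ NonNested ψ
  | .or φ ψ => NonNested φ ∧ NonNested ψ
  | .ck _ φ => PropPos φ


/-- Monotonicity/transfer for negation-free propositional formulas: satisfaction
    only depends on the atoms of the formula present in the valuation, monotonically. -/
lemma sat_mono {P A : Type} (owner : A → P) (H H' : Set (Set P))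
    {V V' : Set A} {M M' : Set (Msg P A)} :
    ∀ {φ : Form P A}, PropPos φ → V ∩ FactsF φ ⊆ V' →
      sat owner H φ V M → sat owner H' φ V' M'
  | .atom p, _, hV, h => hV ⟨h, rfl⟩
  | .neg _, hφ, _, _ => hφ.elim
  | .ck _ _, hφ, _, _ => hφ.elim
  | .and φ ψ, hφ, hV, h =>
      ⟨sat_mono owner H H' hφ.1 (fun q hq => hV ⟨hq.1, Or.inl hq.2⟩) h.1,
       sat_mono owner H H' hφ.2 (fun q hq => hV ⟨hq.1, Or.inr hq.2⟩) h.2⟩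
  | .or φ ψ, hφ, hV, h =>
      h.elim
        (fun h1 => Or.inl (sat_mono owner H H' hφ.1
          (fun q hq => hV ⟨hq.1, Or.inl hq.2⟩) h1))
        (fun h2 => Or.inr (sat_mono owner H H' hφ.2
          (fun q hq => hV ⟨hq.1, Or.inr hq.2⟩) h2))

/-- One indistinguishability step preserves the forced information. -/
lemma indist_step_inv {P A : Type} (owner : A → P) (G : Set P) (V : Set A)
    (M : Set (Msg P A)) {s t : Set A × Set (Msg P A)}
    (hstep : ∃ i ∈ G, indist owner i s t)
    (hs : (∀ m ∈ M, G ⊆ m.grp → m ∈ s.2) ∧ (∀ p ∈ V, G = {owner p} → p ∈ s.1)) :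
    (∀ m ∈ M, G ⊆ m.grp → m ∈ t.2) ∧ (∀ p ∈ V, G = {owner p} → p ∈ t.1) := by
  obtain ⟨i, hiG, h1, h2⟩ := hstep
  constructor
  · intro m hm hG
    have hmem : m ∈ {m ∈ s.2 | i ∈ m.grp} := ⟨hs.1 m hm hG, hG hiG⟩
    rw [h2] at hmem
    exact hmem.1
  · intro p hp hG
    have hio : owner p = i := by
      have hi : i ∈ ({owner p} : Set P) := hG ▸ hiG
      exact (Set.mem_singleton_iff.mp hi).symm
    have hmem : p ∈ {q ∈ s.1 | owner q = i} := ⟨hs.2 p hp hG, hio⟩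
    rw [h1] at hmem
    exact hmem.1

/-- Messages whose group contains all of G, and own atoms when G = {owner p},
    are preserved along ∼_G. -/
lemma reach_inv {P A : Type} (owner : A → P) (G : Set P) (V : Set A)
    (M : Set (Msg P A)) (s : Set A × Set (Msg P A))
    (h : reach owner G (V, M) s) :
    (∀ m ∈ M, G ⊆ m.grp → m ∈ s.2) ∧ (∀ p ∈ V, G = {owner p} → p ∈ s.1) := by
  induction h with
  | single hstep =>
      exact indist_step_inv owner G V M hstep ⟨fun m hm _ => hm, fun p hp _ => hp⟩
  | tail _ hstep ih => exact indist_step_inv owner G V M hstep ih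

/-- One deletion step is indistinguishable for the new player. -/
lemma indist_del_step {P A : Type} (owner : A → P) (V B : Set A)
    (M : Set (Msg P A)) (g : P) (l : List P) :
    indist owner g
      (V \ {q | q ∈ B ∧ ∃ g' ∈ l, owner q ≠ g'},
       M \ {m | m.fact ∈ B ∧ ∃ g' ∈ l, g' ∉ m.grp})
      (V \ {q | q ∈ B ∧ ∃ g' ∈ g :: l, owner q ≠ g'},
       M \ {m | m.fact ∈ B ∧ ∃ g' ∈ g :: l, g' ∉ m.grp}) := by
  constructor
  · ext p
    simp only [Set.mem_setOf_eq, Set.mem_sep_iff, Set.mem_diff, List.mem_cons]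
    constructor
    · rintro ⟨⟨hpV, hnd⟩, hop⟩
      refine ⟨⟨hpV, ?_⟩, hop⟩
      rintro ⟨hpB, g', hg', hne⟩
      rcases hg' with rfl | hg'
      · exact hne hop
      · exact hnd ⟨hpB, g', hg', hne⟩
    · rintro ⟨⟨hpV, hnd⟩, hop⟩
      refine ⟨⟨hpV, ?_⟩, hop⟩
      rintro ⟨hpB, g', hg', hne⟩
      exact hnd ⟨hpB, g', Or.inr hg', hne⟩
  · ext m
    simp only [Set.mem_setOf_eq, Set.mem_sep_iff, Set.mem_diff, List.mem_cons]
    constructor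
    · rintro ⟨⟨hmM, hnd⟩, hgm⟩
      refine ⟨⟨hmM, ?_⟩, hgm⟩
      rintro ⟨hfB, g', hg', hne⟩
      rcases hg' with rfl | hg'
      · exact hne hgm
      · exact hnd ⟨hfB, g', hg', hne⟩
    · rintro ⟨⟨hmM, hnd⟩, hgm⟩
      refine ⟨⟨hmM, ?_⟩, hgm⟩
      rintro ⟨hfB, g', hg', hne⟩
      exact hnd ⟨hfB, g', Or.inr hg', hne⟩

/-- The deleted state is reachable via a chain of players from G. -/
lemma reach_del {P A : Type} (owner : A → P) (G : Set P) (V B : Set A)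
    (M : Set (Msg P A)) :
    ∀ l : List P, l ≠ [] → (∀ g ∈ l, g ∈ G) →
      reach owner G (V, M)
        (V \ {q | q ∈ B ∧ ∃ g' ∈ l, owner q ≠ g'},
         M \ {m | m.fact ∈ B ∧ ∃ g' ∈ l, g' ∉ m.grp})
  | [], h, _ => absurd rfl h
  | g :: l, _, hG => by
    cases l with
    | nil =>
      refine Relation.TransGen.single ⟨g, hG g (by simp), ?_⟩
      have h := indist_del_step owner V B M g []
      have h1 : {q | q ∈ B ∧ ∃ g' ∈ ([] : List P), owner q ≠ g'} = (∅ : Set A) := by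
        ext q; simp
      have h2 : {m | m.fact ∈ B ∧ ∃ g' ∈ ([] : List P), g' ∉ m.grp}
          = (∅ : Set (Msg P A)) := by
        ext m; simp
      rw [h1, h2, Set.diff_empty, Set.diff_empty] at h
      exact h
    | cons a t =>
      refine Relation.TransGen.tail
        (reach_del owner G V B M (a :: t) (by simp)
          (fun x hx => hG x (List.mem_cons_of_mem g hx)))
        ⟨g, hG g (by simp), indist_del_step owner V B M g (a :: t)⟩

/-- Removing all messages about a set of atoms, and those atoms, preserves
    being a forwarding state. -/
lemma fwstate_del {P A : Type} (owner : A → P) (V B : Set A) (M : Set (Msg P A))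
    (hS : FwState owner V M) :
    FwState owner (V \ B) {m ∈ M | m.fact ∉ B} := by
  rintro m ⟨hmM, hmB⟩
  obtain ⟨hsg, L, hLM, hch, hnd, hfacts, ⟨m₀, hh, how, hv⟩, hlast⟩ := hS m hmM
  refine ⟨hsg, L, ?_, hch, hnd, hfacts, ⟨m₀, hh, how, ?_⟩, hlast⟩
  · intro x hx
    exact ⟨hLM x hx, by rw [hfacts x hx]; exact hmB⟩
  · have hm₀L : m₀ ∈ L := by
      cases L with
      | nil => simp at hh
      | cons a t =>
        simp only [List.head?_cons, Option.some.injEq] at hh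
        subst hh; exact List.mem_cons_self
    exact ⟨hv, by rw [hfacts m₀ hm₀L]; exact hmB⟩

theorem fw_nonnested_H_independent {P A : Type} [Fintype P] (owner : A → P)
    (H : Set (Set P)) (V : Set A) (M : Set (Msg P A))
    (hS : FwState owner V M) (hC : HComp H M)
    (φ : Form P A) (hφ : NonNested φ) :
    sat owner (completeH P) φ V M ↔ sat owner H φ V M := by
  induction φ with
  | atom p => exact Iff.rfl
  | neg φ ih => exact hφ.elim
  | and φ ψ ih1 ih2 =>
    obtain ⟨h1, h2⟩ := hφ
    exact and_congr (ih1 h1) (ih2 h2)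
  | or φ ψ ih1 ih2 =>
    obtain ⟨h1, h2⟩ := hφ
    exact or_congr (ih1 h1) (ih2 h2)
  | ck G ψ _ =>
    have hψ : PropPos ψ := hφ
    show (∀ V' M', FwState owner V' M' → HComp (completeH P) M' →
        reach owner G (V, M) (V', M') → sat owner (completeH P) ψ V' M') ↔
      (∀ V' M', FwState owner V' M' → HComp H M' →
        reach owner G (V, M) (V', M') → sat owner H ψ V' M')
    constructor
    · intro h V' M' hfw hcomp hreach
      have hc' : HComp (completeH P) M' := fun m hm => ⟨m.sender, (hfw m hm).1⟩
      exact sat_mono owner (completeH P) H hψ Set.inter_subset_left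
        (h V' M' hfw hc' hreach)
    · intro h V' M' hfw _hcomp hreach
      have hGne : G.Nonempty := by
        cases hreach with
        | single hstep => obtain ⟨i, hi, _⟩ := hstep; exact ⟨i, hi⟩
        | tail _ hstep => obtain ⟨i, hi, _⟩ := hstep; exact ⟨i, hi⟩
      set W : Set A :=
        {p | (∃ m ∈ M, G ⊆ m.grp ∧ m.fact = p) ∨ (p ∈ V ∧ G = {owner p})} with hW
      set B : Set A := FactsF ψ \ W with hBdef
      have hGfin : G.Finite := Set.toFinite G
      set l : List P := hGfin.toFinset.toList with hl
      have hmem : ∀ g, g ∈ l ↔ g ∈ G := fun g => by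
        rw [hl, Finset.mem_toList, Set.Finite.mem_toFinset]
      have hlne : l ≠ [] := by
        intro h0
        obtain ⟨g, hg⟩ := hGne
        have := (hmem g).mpr hg
        rw [h0] at this
        exact absurd this List.not_mem_nil
      have hreach2 := reach_del owner G V B M l hlne (fun g hg => (hmem g).mp hg)
      have hVeq : V \ {q | q ∈ B ∧ ∃ g' ∈ l, owner q ≠ g'} = V \ B := by
        ext q
        simp only [Set.mem_diff, Set.mem_setOf_eq]
        constructor
        · rintro ⟨hqV, hnd⟩
          refine ⟨hqV, fun hqB => hnd ⟨hqB, ?_⟩⟩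
          by_contra hall
          push_neg at hall
          have hGeq : G = {owner q} := by
            apply Set.eq_singleton_iff_nonempty_unique_mem.mpr
            refine ⟨hGne, fun x hx => ?_⟩
            exact (hall x ((hmem x).mpr hx)).symm
          exact hqB.2 (Or.inr ⟨hqV, hGeq⟩)
        · rintro ⟨hqV, hnB⟩
          exact ⟨hqV, fun hd => hnB hd.1⟩
      have hMeq : M \ {m | m.fact ∈ B ∧ ∃ g' ∈ l, g' ∉ m.grp}
          = {m ∈ M | m.fact ∉ B} := by
        ext m
        simp only [Set.mem_diff, Set.mem_setOf_eq, Set.mem_sep_iff]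
        constructor
        · rintro ⟨hmM, hnd⟩
          refine ⟨hmM, fun hfB => hnd ⟨hfB, ?_⟩⟩
          by_contra hall
          push_neg at hall
          have hGsub : G ⊆ m.grp := fun g hg => hall g ((hmem g).mpr hg)
          exact hfB.2 (Or.inl ⟨m, hmM, hGsub, rfl⟩)
        · rintro ⟨hmM, hnB⟩
          exact ⟨hmM, fun hd => hnB hd.1⟩
      rw [hVeq, hMeq] at hreach2
      have hfw2 : FwState owner (V \ B) {m ∈ M | m.fact ∉ B} :=
        fwstate_del owner V B M hS
      have hcomp2 : HComp H {m ∈ M | m.fact ∉ B} := fun m hm => hC m hm.1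
      have hsat := h (V \ B) {m ∈ M | m.fact ∉ B} hfw2 hcomp2 hreach2
      have hWV' : W ⊆ V' := by
        intro p hp
        have hinv := reach_inv owner G V M (V', M') hreach
        rcases hp with ⟨m, hmM, hsub, hfact⟩ | ⟨hpV, hG⟩
        · have hmM' : m ∈ M' := hinv.1 m hmM hsub
          obtain ⟨_, L, hLM, _, _, hfacts, ⟨m₀, hh, _, hv⟩, _⟩ := hfw m hmM'
          have hm₀L : m₀ ∈ L := by
            cases L with
            | nil => simp at hh
            | cons a t =>
              simp only [List.head?_cons, Option.some.injEq] at hh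
              subst hh; exact List.mem_cons_self
          rw [← hfact, ← hfacts m₀ hm₀L]
          exact hv
        · exact hinv.2 p hpV hG
      refine sat_mono owner H (completeH P) hψ ?_ hsat
      rintro q ⟨hq1, hq2⟩
      have hqW : q ∈ W := by
        by_contra hqW
        exact hq1.2 ⟨hq2, hqW⟩
      exact hWV' hqW
end

section
/- Distributivity of C_G over disjunction of negation-free propositional formulas (forwarding setting): For any φ₁, φ₂ built from atoms with only ∧ and ∨, any nonempty G ⊆ N, and H-compliant forwarding state (V,M), (V,M) ⊨_H C_G(φ₁ ∨ φ₂) iff (V,M) ⊨_H C_G φ₁ ∨ C_G φ₂. -/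
/-- In a forwarding state, all message facts are true. -/
lemma facts_true_aux {P A : Type} (owner : A → P) {V : Set A} {M : Set (Msg P A)}
    (hS : FwState owner V M) : ∀ m ∈ M, m.fact ∈ V := by
  intro m hm
  obtain ⟨_, L, hLM, hch, hnd, hfacts, ⟨m₀, hhead, hown, hV⟩, hlast⟩ := hS m hm
  have hm₀L : m₀ ∈ L := List.mem_of_mem_head? hhead
  have := hfacts m₀ hm₀L
  rw [← this]; exact hV

/-- Positive propositional satisfaction is monotone in V (and ignores M). -/
lemma sat_mono_aux {P A : Type} (owner : A → P) (H : Set (Set P)) :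
    ∀ (φ : Form P A), PropPos φ → ∀ {V V' : Set A} {M M' : Set (Msg P A)},
      V ⊆ V' → sat owner H φ V M → sat owner H φ V' M'
  | .atom p, _, _, _, _, _, hVV, h => hVV h
  | .and φ ψ, hφ, _, _, _, _, hVV, h =>
      ⟨sat_mono_aux owner H φ hφ.1 hVV h.1, sat_mono_aux owner H ψ hφ.2 hVV h.2⟩
  | .or φ ψ, hφ, _, _, _, _, hVV, h =>
      h.elim (fun h => Or.inl (sat_mono_aux owner H φ hφ.1 hVV h))
        (fun h => Or.inr (sat_mono_aux owner H ψ hφ.2 hVV h))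

theorem fw_ck_distributes_over_prop_disjunction {P A : Type} [Fintype P]
    (owner : A → P) (H : Set (Set P)) (V : Set A) (M : Set (Msg P A))
    (hS : FwState owner V M) (hC : HComp H M)
    (G : Set P) (hG : G.Nonempty)
    (φ₁ φ₂ : Form P A) (h₁ : PropPos φ₁) (h₂ : PropPos φ₂) :
    sat owner H (.ck G (.or φ₁ φ₂)) V M ↔
      sat owner H (.ck G φ₁) V M ∨ sat owner H (.ck G φ₂) V M := by
  classical
  constructor
  · intro hck
    by_contra hcon
    push_neg at hcon
    obtain ⟨h1', h2'⟩ := hcon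
    simp only [sat] at hck h1' h2'
    push_neg at h1' h2'
    obtain ⟨V₁, M₁, hS₁, hC₁, hr₁, hφ₁⟩ := h1'
    obtain ⟨V₂, M₂, hS₂, hC₂, hr₂, hφ₂⟩ := h2'
    -- canonical minimal state
    set Mc : Set (Msg P A) := {m ∈ M | G ⊆ m.grp} with hMc
    set expl : Msg P A → List (Msg P A) :=
      fun m => if h : m ∈ M then Classical.choose (hS m h).2 else [] with hexpl
    have explspec : ∀ m (h : m ∈ M),
        (∀ x ∈ expl m, x ∈ M) ∧
        List.Chain' (leadsto owner) (expl m) ∧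
        ((expl m).map Msg.sender).Nodup ∧
        (∀ x ∈ expl m, x.fact = m.fact) ∧
        (∃ m₀, (expl m).head? = some m₀ ∧ owner m₀.fact = m₀.sender ∧ m₀.fact ∈ V) ∧
        (expl m).getLast? = some m := by
      intro m h
      simp only [hexpl, dif_pos h]
      exact Classical.choose_spec (hS m h).2
    set E : Set (Msg P A) := {x | ∃ m ∈ Mc, x ∈ expl m} with hE
    have hEM : E ⊆ M := by
      rintro x ⟨m, hm, hx⟩
      exact (explspec m hm.1).1 x hx
    set FMc : Set A := Facts Mc with hFMc
    have hFMcV : FMc ⊆ V := by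
      rintro p ⟨m, hm, rfl⟩
      exact facts_true_aux owner hS m hm.1
    set Vst : Set P → Set A := fun s => {p ∈ V | ∀ i ∈ s, owner p = i} ∪ FMc with hVst
    set Mst : Set P → Set (Msg P A) := fun s => {m ∈ M | ∀ i ∈ s, i ∈ m.grp} ∪ E with hMst
    have hV0 : Vst ∅ = V := by
      apply Set.Subset.antisymm
      · rintro p (⟨hp, _⟩ | hp)
        · exact hp
        · exact hFMcV hp
      · intro p hp; exact Or.inl ⟨hp, by simp⟩
    have hM0 : Mst ∅ = M := by
      apply Set.Subset.antisymm
      · rintro m (⟨hm, _⟩ | hm)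
        · exact hm
        · exact hEM hm
      · intro m hm; exact Or.inl ⟨hm, by simp⟩
    -- single indistinguishability step
    have step : ∀ (s : Set P) (i : P),
        indist owner i (Vst s, Mst s) (Vst (insert i s), Mst (insert i s)) := by
      intro s i
      constructor
      · ext p
        simp only [hVst, Set.mem_setOf_eq, Set.mem_union, Set.mem_insert_iff]
        constructor
        · rintro ⟨(⟨hpV, hall⟩ | hpF), hown⟩
          · exact ⟨Or.inl ⟨hpV, by rintro j (rfl | hj); exacts [hown, hall j hj]⟩, hown⟩
          · exact ⟨Or.inr hpF, hown⟩
        · rintro ⟨(⟨hpV, hall⟩ | hpF), hown⟩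
          · exact ⟨Or.inl ⟨hpV, fun j hj => hall j (Or.inr hj)⟩, hown⟩
          · exact ⟨Or.inr hpF, hown⟩
      · ext m
        simp only [hMst, Set.mem_setOf_eq, Set.mem_union, Set.mem_insert_iff]
        constructor
        · rintro ⟨(⟨hmM, hall⟩ | hmE), hgrp⟩
          · exact ⟨Or.inl ⟨hmM, by rintro j (rfl | hj); exacts [hgrp, hall j hj]⟩, hgrp⟩
          · exact ⟨Or.inr hmE, hgrp⟩
        · rintro ⟨(⟨hmM, hall⟩ | hmE), hgrp⟩
          · exact ⟨Or.inl ⟨hmM, fun j hj => hall j (Or.inr hj)⟩, hgrp⟩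
          · exact ⟨Or.inr hmE, hgrp⟩
    -- reflexive transitive chain to (Vst s, Mst s) for finite s ⊆ G
    have rtg : ∀ (s : Set P), s.Finite → s ⊆ G →
        Relation.ReflTransGen (fun a b => ∃ i ∈ G, indist owner i a b)
          (Vst ∅, Mst ∅) (Vst s, Mst s) := by
      intro s hs
      refine Set.Finite.induction_on
        (motive := fun s _ => s ⊆ G → Relation.ReflTransGen (fun a b => ∃ i ∈ G, indist owner i a b)
          (Vst ∅, Mst ∅) (Vst s, Mst s)) s hs (fun _ => Relation.ReflTransGen.refl) ?_
      intro a t ha htfin ih hsub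
      exact (ih (fun x hx => hsub (Set.mem_insert_of_mem a hx))).tail
        ⟨a, hsub (Set.mem_insert a t), step t a⟩
    obtain ⟨i₀, hi₀⟩ := hG
    have hreach : reach owner G (V, M) (Vst G, Mst G) := by
      have h0 : ((Vst ∅, Mst ∅) : Set A × Set (Msg P A)) = (V, M) := by rw [hV0, hM0]
      have := rtg G (Set.toFinite G) (le_refl G)
      rw [h0] at this
      exact Relation.TransGen.head' ⟨i₀, hi₀, rfl, rfl⟩ this
    -- the canonical state is a compliant forwarding state
    have hMstG : Mst G = Mc ∪ E := rfl
    have hMstM : Mst G ⊆ M := by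
      rintro m (⟨hm, _⟩ | hm); exacts [hm, hEM hm]
    have hcomp : HComp H (Mst G) := fun m hm => hC m (hMstM hm)
    have hfw : FwState owner (Vst G) (Mst G) := by
      rintro m hm
      refine ⟨(hS m (hMstM hm)).1, ?_⟩
      rcases hm with hm | hm
      · -- m ∈ Mc : use its chosen explanation, contained in E
        obtain ⟨hmem, hch, hnd, hfacts, ⟨m₀, hhead, hown, hV'⟩, hlast⟩ := explspec m hm.1
        refine ⟨expl m, fun x hx => Or.inr ⟨m, hm, hx⟩, hch, hnd, hfacts, ⟨m₀, hhead, hown, ?_⟩, hlast⟩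
        have hm₀ : m₀ ∈ expl m := List.mem_of_mem_head? hhead
        rw [hfacts m₀ hm₀]
        exact Or.inr ⟨m, hm, rfl⟩
      · -- m ∈ E : prefix of the chosen explanation of some m' ∈ Mc
        obtain ⟨m', hm', hx⟩ := hm
        obtain ⟨hmem, hch, hnd, hfacts, ⟨m₀, hhead, hown, hV'⟩, hlast⟩ := explspec m' hm'.1
        obtain ⟨l₁, l₂, hL⟩ := List.append_of_mem hx
        have hpre : (l₁ ++ [m]) <+: expl m' := ⟨l₂, by rw [hL]; simp⟩
        have hsub : List.Sublist (l₁ ++ [m]) (expl m') := hpre.sublist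
        refine ⟨l₁ ++ [m], ?_, hch.prefix hpre, ?_, ?_, ⟨m₀, ?_, hown, ?_⟩, ?_⟩
        · intro x hx'
          exact Or.inr ⟨m', hm', hsub.mem hx'⟩
        · exact hnd.sublist (hsub.map Msg.sender)
        · intro x hx'
          rw [hfacts x (hsub.mem hx'), ← hfacts m hx]
        · rw [← hhead, hL]
          cases l₁ <;> simp
        · have hm₀ : m₀ ∈ expl m' := List.mem_of_mem_head? hhead
          rw [hfacts m₀ hm₀]
          exact Or.inr ⟨m', hm', rfl⟩
        · exact List.getLast?_concat
    -- lower bound: the canonical facts hold in every reachable forwarding state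
    have lower : ∀ {V' M' : Set A × Set (Msg P A)},
        Relation.TransGen (fun a b => ∃ i ∈ G, indist owner i a b) V' M' →
        ({p ∈ V'.1 | ∀ i ∈ G, owner p = i} ⊆ M'.1 ∧ {m ∈ V'.2 | G ⊆ m.grp} ⊆ M'.2) := by
      have key : ∀ a b : Set A × Set (Msg P A), (∃ i ∈ G, indist owner i a b) →
          ({p ∈ a.1 | ∀ i ∈ G, owner p = i} ⊆ b.1 ∧ {m ∈ a.2 | G ⊆ m.grp} ⊆ b.2) := by
        rintro a b ⟨i, hi, hV, hM⟩
        constructor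
        · intro p hp
          have : p ∈ {p ∈ a.1 | owner p = i} := ⟨hp.1, hp.2 i hi⟩
          rw [hV] at this
          exact this.1
        · intro m hm
          have : m ∈ {m ∈ a.2 | i ∈ m.grp} := ⟨hm.1, hm.2 hi⟩
          rw [hM] at this
          exact this.1
      intro a b h
      induction h with
      | single h => exact key _ _ h
      | tail _ h ih =>
        obtain ⟨h1, h2⟩ := key _ _ h
        exact ⟨fun p hp => h1 ⟨(ih.1 ⟨hp.1, hp.2⟩ : _), hp.2⟩,
               fun m hm => h2 ⟨ih.2 ⟨hm.1, hm.2⟩, hm.2⟩⟩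
    have lower1 : Vst G ⊆ V₁ := by
      rintro p (⟨hpV, hall⟩ | ⟨m, hm, rfl⟩)
      · exact (lower hr₁).1 ⟨hpV, hall⟩
      · exact facts_true_aux owner hS₁ m ((lower hr₁).2 ⟨hm.1, hm.2⟩)
    have lower2 : Vst G ⊆ V₂ := by
      rintro p (⟨hpV, hall⟩ | ⟨m, hm, rfl⟩)
      · exact (lower hr₂).1 ⟨hpV, hall⟩
      · exact facts_true_aux owner hS₂ m ((lower hr₂).2 ⟨hm.1, hm.2⟩)
    have hsat := hck (Vst G) (Mst G) hfw hcomp hreach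
    rcases hsat with h | h
    · exact hφ₁ (sat_mono_aux owner H φ₁ h₁ lower1 h)
    · exact hφ₂ (sat_mono_aux owner H φ₂ h₂ lower2 h)
  · rintro (h | h) <;> intro V' M' hS' hC' hr
    · exact Or.inl (h V' M' hS' hC' hr)
    · exact Or.inr (h V' M' hS' hC' hr)
end
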